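/- Let C be a closed cone with nonempty interior in a finite-dimensional real Banach space, let f : int C → int C be order-preserving and subhomogeneous, and suppose f has a fixed point in int C. For 0 < λ < 1 let f_λ := λf + (1 − λ)·id. Then for every x ∈ int C the sequence f_λ^k(x) converges to a fixed point of f. -/

import Mathlib

open Filter Topology

set_option linter.unusedSectionVars false

section Helpers

variable {X : Type*} [NormedAddCommGroup X] [NormedSpace ℝ X] [FiniteDimensional ℝ X]
variable {C : Set X}

lemma cone_add (hconv : Convex ℝ C) (hcone : ∀ x ∈ C, ∀ t : ℝ, 0 ≤ t → t • x ∈ C)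
    {a b : X} (ha : a ∈ C) (hb : b ∈ C) : a + b ∈ C := by
  have h := hconv ha hb (by norm_num : (0:ℝ) ≤ 1/2) (by norm_num : (0:ℝ) ≤ 1/2) (by norm_num)
  have h2 := hcone _ h 2 (by norm_num)
  rw [smul_add, smul_smul, smul_smul] at h2
  norm_num at h2
  exact h2

lemma interior_ball {z : X} (hz : z ∈ interior C) :
    ∃ ρ > 0, ∀ w : X, ‖w‖ ≤ ρ → z + w ∈ C := by
  obtain ⟨ε, hε, hball⟩ := Metric.mem_nhds_iff.1 (mem_interior_iff_mem_nhds.1 hz)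
  refine ⟨ε/2, by positivity, fun w hw => hball ?_⟩
  simp only [Metric.mem_ball, dist_eq_norm, add_sub_cancel_left]
  linarith

lemma interior_add_cone (hconv : Convex ℝ C) (hcone : ∀ x ∈ C, ∀ t : ℝ, 0 ≤ t → t • x ∈ C)
    {z c : X} (hz : z ∈ interior C) (hc : c ∈ C) : z + c ∈ interior C := by
  obtain ⟨ε, hε, hball⟩ := Metric.mem_nhds_iff.1 (mem_interior_iff_mem_nhds.1 hz)
  refine mem_interior.2 ⟨Metric.ball (z + c) ε, ?_, Metric.isOpen_ball, Metric.mem_ball_self hε⟩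
  intro w hw
  have h1 : w - c ∈ Metric.ball z ε := by
    simp only [Metric.mem_ball, dist_eq_norm] at hw ⊢
    have : w - c - z = w - (z + c) := by abel
    rw [this]; exact hw
  have := cone_add hconv hcone (hball h1) hc
  simpa using this

lemma interior_smul_pos (hcone : ∀ x ∈ C, ∀ t : ℝ, 0 ≤ t → t • x ∈ C)
    {t : ℝ} (ht : 0 < t) {z : X} (hz : z ∈ interior C) : t • z ∈ interior C := by
  obtain ⟨ε, hε, hball⟩ := Metric.mem_nhds_iff.1 (mem_interior_iff_mem_nhds.1 hz)
  refine mem_interior.2 ⟨Metric.ball (t • z) (t * ε), ?_, Metric.isOpen_ball,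
    Metric.mem_ball_self (by positivity)⟩
  intro w hw
  have h1 : t⁻¹ • w ∈ Metric.ball z ε := by
    simp only [Metric.mem_ball, dist_eq_norm] at hw ⊢
    have : t⁻¹ • w - z = t⁻¹ • (w - t • z) := by
      rw [smul_sub, smul_smul, inv_mul_cancel₀ ht.ne', one_smul]
    rw [this, norm_smul]
    simp only [norm_inv, Real.norm_eq_abs, abs_of_pos ht]
    rw [inv_mul_lt_iff₀ ht]
    exact hw
  have := hcone _ (hball h1) t ht.le
  rwa [smul_smul, mul_inv_cancel₀ ht.ne', one_smul] at this

lemma order_bound (hclosed : IsClosed C) (hpointed : ∀ x, x ∈ C → -x ∈ C → x = 0)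
    (hcone : ∀ x ∈ C, ∀ t : ℝ, 0 ≤ t → t • x ∈ C) (v : X) :
    ∃ K > 0, ∀ w : X, v - w ∈ C → v + w ∈ C → ‖w‖ ≤ K := by
  by_contra h
  push_neg at h
  choose w hw1 hw2 hw3 using fun n : ℕ => h ((n:ℝ)+1) (by positivity)
  have hwpos : ∀ n, 0 < ‖w n‖ := fun n => lt_trans (by positivity) (hw3 n)
  set e : ℕ → X := fun n => ‖w n‖⁻¹ • w n with he
  have hesph : ∀ n, e n ∈ Metric.sphere (0:X) 1 := by
    intro n
    simp [he, norm_smul, inv_mul_cancel₀ (hwpos n).ne']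
  obtain ⟨a, ha, φ, hφ, hlim⟩ := (isCompact_sphere (0:X) 1).tendsto_subseq hesph
  have hnorm_top : Tendsto (fun n => ‖w (φ n)‖) atTop atTop := by
    have hle : ∀ n : ℕ, (n:ℝ) + 1 ≤ ‖w (φ n)‖ := by
      intro n
      have h1 : (n:ℝ) ≤ (φ n : ℝ) := by exact_mod_cast hφ.le_apply
      have := (hw3 (φ n)).le
      linarith
    exact tendsto_atTop_mono hle
      (tendsto_atTop_add_const_right _ 1 tendsto_natCast_atTop_atTop)
  have hinv0 : Tendsto (fun n => ‖w (φ n)‖⁻¹) atTop (𝓝 0) := hnorm_top.inv_tendsto_atTop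
  have hm : ∀ n, ‖w (φ n)‖⁻¹ • v - e (φ n) ∈ C := by
    intro n
    have := hcone _ (hw1 (φ n)) (‖w (φ n)‖⁻¹) (by positivity)
    rwa [smul_sub] at this
  have hp : ∀ n, ‖w (φ n)‖⁻¹ • v + e (φ n) ∈ C := by
    intro n
    have := hcone _ (hw2 (φ n)) (‖w (φ n)‖⁻¹) (by positivity)
    rwa [smul_add] at this
  have hlim1 : Tendsto (fun n => ‖w (φ n)‖⁻¹ • v - e (φ n)) atTop (𝓝 (-a)) := by
    have h1 : Tendsto (fun n => ‖w (φ n)‖⁻¹ • v) atTop (𝓝 0) := by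
      simpa using hinv0.smul_const v
    simpa using h1.sub hlim
  have hlim2 : Tendsto (fun n => ‖w (φ n)‖⁻¹ • v + e (φ n)) atTop (𝓝 a) := by
    have h1 : Tendsto (fun n => ‖w (φ n)‖⁻¹ • v) atTop (𝓝 0) := by
      simpa using hinv0.smul_const v
    simpa using h1.add hlim
  have hac : a ∈ C := hclosed.mem_of_tendsto hlim2 (Eventually.of_forall hp)
  have hnac : -a ∈ C := hclosed.mem_of_tendsto hlim1 (Eventually.of_forall hm)
  have : a = 0 := hpointed a hac hnac
  rw [this] at ha
  simp at ha

lemma support_exists (hconv : Convex ℝ C) (hcone : ∀ x ∈ C, ∀ t : ℝ, 0 ≤ t → t • x ∈ C)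
    (hint : (interior C).Nonempty)
    {y : X} (hy : y ∈ C) (hyn : y ∉ interior C) :
    ∃ ℓ : X →L[ℝ] ℝ, (∀ c ∈ C, 0 ≤ ℓ c) ∧ ℓ y = 0 ∧ ∀ w ∈ interior C, 0 < ℓ w := by
  obtain ⟨ℓ₀, hℓ₀⟩ := geometric_hahn_banach_open_point (hconv.interior) isOpen_interior hyn
  obtain ⟨z₀, hz₀⟩ := hint
  -- Step A : ∀ c ∈ C, ℓ₀ c ≤ ℓ₀ y
  have hA : ∀ c ∈ C, ℓ₀ c ≤ ℓ₀ y := by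
    intro c hc
    have hcomb : ∀ n : ℕ, ℓ₀ ((1/(n+1) : ℝ) • z₀ + (1 - 1/((n:ℝ)+1)) • c) < ℓ₀ y := by
      intro n
      apply hℓ₀
      apply hconv.combo_interior_self_mem_interior hz₀ hc
      · positivity
      · have : (1:ℝ)/(n+1) ≤ 1 := by
          rw [div_le_one (by positivity)]; linarith [Nat.cast_nonneg (α := ℝ) n]
        linarith
      · ring
    have htend : Tendsto (fun n : ℕ => ℓ₀ ((1/(n+1) : ℝ) • z₀ + (1 - 1/((n:ℝ)+1)) • c))
        atTop (𝓝 (ℓ₀ c)) := by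
      have h1 : Tendsto (fun n : ℕ => (1/(n+1) : ℝ)) atTop (𝓝 0) :=
        tendsto_one_div_add_atTop_nhds_zero_nat
      have h2 : Tendsto (fun n : ℕ => (1/(n+1) : ℝ) • z₀ + (1 - 1/((n:ℝ)+1)) • c)
          atTop (𝓝 ((0:ℝ) • z₀ + (1 - 0 : ℝ) • c)) := by
        exact (h1.smul_const z₀).add (((tendsto_const_nhds (x := (1:ℝ))).sub h1).smul_const c)
      simp only [zero_smul, zero_add, sub_zero, one_smul] at h2
      exact (ℓ₀.continuous.tendsto c).comp h2
    exact le_of_tendsto htend (Eventually.of_forall fun n => (hcomb n).le)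
  have h0C : (0:X) ∈ C := by
    have := hcone z₀ (interior_subset hz₀) 0 le_rfl
    simpa using this
  have hy0 : 0 ≤ ℓ₀ y := by simpa using hA 0 h0C
  -- Step C : ∀ c ∈ C, ℓ₀ c ≤ 0
  have hC0 : ∀ c ∈ C, ℓ₀ c ≤ 0 := by
    intro c hc
    by_contra hpos
    push_neg at hpos
    have hτ : (ℓ₀ y + 1) / ℓ₀ c > 0 := by positivity
    have hmem := hcone c hc _ hτ.le
    have := hA _ hmem
    rw [map_smul] at this
    simp only [smul_eq_mul] at this
    rw [div_mul_cancel₀ _ hpos.ne'] at this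
    linarith
  have hyy : ℓ₀ y = 0 := le_antisymm (hC0 y hy) hy0
  refine ⟨-ℓ₀, fun c hc => ?_, by simp [hyy], fun w hw => ?_⟩
  · simp only [ContinuousLinearMap.neg_apply, neg_nonneg]
    exact hC0 c hc
  · simp only [ContinuousLinearMap.neg_apply, neg_pos]
    have := hℓ₀ w hw
    rw [hyy] at this
    exact this

noncomputable def MF (C : Set X) (a b : X) : ℝ := sInf {t : ℝ | t • b - a ∈ C}

lemma MF_nonempty (hcone : ∀ x ∈ C, ∀ t : ℝ, 0 ≤ t → t • x ∈ C) {a b : X} (hb : b ∈ interior C) : {t : ℝ | t • b - a ∈ C}.Nonempty := by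
  obtain ⟨ρ, hρ, hball⟩ := interior_ball hb
  set t : ℝ := ‖a‖/ρ + 1 with ht
  have htpos : 0 < t := by positivity
  refine ⟨t, ?_⟩
  have hmem : b + (-(t⁻¹ • a)) ∈ C := by
    apply hball
    rw [norm_neg, norm_smul, norm_inv, Real.norm_eq_abs, abs_of_pos htpos]
    rw [inv_mul_le_iff₀ htpos]
    have htρ : t * ρ = ‖a‖ + ρ := by
      rw [ht]; field_simp
    linarith
  have := hcone _ hmem t htpos.le
  simp only [Set.mem_setOf_eq]
  have heq : t • (b + -(t⁻¹ • a)) = t • b - a := by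
    rw [smul_add, smul_neg, smul_smul, mul_inv_cancel₀ htpos.ne', one_smul]
    abel
  rwa [heq] at this

lemma MF_bddBelow (hclosed : IsClosed C) (hpointed : ∀ x, x ∈ C → -x ∈ C → x = 0)
    (hcone : ∀ x ∈ C, ∀ t : ℝ, 0 ≤ t → t • x ∈ C)
    {a b : X} (hb : b ∈ interior C) (hb0 : b ≠ 0) : BddBelow {t : ℝ | t • b - a ∈ C} := by
  by_contra hbdd
  rw [not_bddBelow_iff] at hbdd
  have hex : ∀ n : ℕ, ∃ t : ℝ, t • b - a ∈ C ∧ t < -(n+1) := by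
    intro n
    obtain ⟨t, ht, hlt⟩ := hbdd (-(n+1))
    exact ⟨t, ht, hlt⟩
  choose t ht hlt using hex
  have htneg : ∀ n, 0 < -(t n) := by
    intro n
    have h1 := hlt n
    have h2 : (0:ℝ) ≤ (n:ℝ) := Nat.cast_nonneg n
    linarith
  have hmem : ∀ n, -b - (-(t n))⁻¹ • a ∈ C := by
    intro n
    have h1 := hcone _ (ht n) ((-(t n))⁻¹) (inv_nonneg.2 (htneg n).le)
    have hne : t n ≠ 0 := by
      intro h
      have h2 := htneg n
      rw [h] at h2
      simp at h2
    have heq : (-(t n))⁻¹ • (t n • b - a) = -b - (-(t n))⁻¹ • a := by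
      rw [smul_sub, smul_smul]
      have hmul : (-(t n))⁻¹ * t n = -1 := by
        rw [inv_neg, neg_mul, inv_mul_cancel₀ hne]
      rw [hmul, neg_one_smul]
    rwa [heq] at h1
  have hlim : Tendsto (fun n => -b - (-(t n))⁻¹ • a) atTop (𝓝 (-b)) := by
    have h1 : Tendsto (fun n => -(t n)) atTop atTop := by
      apply tendsto_atTop_mono (fun n => by linarith [hlt n] : ∀ n : ℕ, (n:ℝ) + 1 ≤ -(t n))
      exact tendsto_atTop_add_const_right _ 1 tendsto_natCast_atTop_atTop
    have h2 : Tendsto (fun n => (-(t n))⁻¹ • a) atTop (𝓝 0) := by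
      simpa using (h1.inv_tendsto_atTop).smul_const a
    simpa using (tendsto_const_nhds (x := -b)).sub h2
  have hnb : -b ∈ C := hclosed.mem_of_tendsto hlim (Eventually.of_forall hmem)
  exact hb0 (hpointed b (interior_subset hb) hnb)

lemma MF_mem (hclosed : IsClosed C) (hpointed : ∀ x, x ∈ C → -x ∈ C → x = 0)
    (hcone : ∀ x ∈ C, ∀ t : ℝ, 0 ≤ t → t • x ∈ C)
    {a b : X} (hb : b ∈ interior C) (hb0 : b ≠ 0) : (MF C a b) • b - a ∈ C := by
  have hS : IsClosed {t : ℝ | t • b - a ∈ C} := by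
    have : Continuous fun t : ℝ => t • b - a := (continuous_id.smul continuous_const).sub continuous_const
    exact hclosed.preimage this
  exact hS.csInf_mem (MF_nonempty hcone hb) (MF_bddBelow hclosed hpointed hcone hb hb0)

lemma MF_le (hclosed : IsClosed C) (hpointed : ∀ x, x ∈ C → -x ∈ C → x = 0)
    (hcone : ∀ x ∈ C, ∀ t : ℝ, 0 ≤ t → t • x ∈ C)
    {a b : X} (hb : b ∈ interior C) (hb0 : b ≠ 0) {t : ℝ} (ht : t • b - a ∈ C) :
    MF C a b ≤ t := csInf_le (MF_bddBelow hclosed hpointed hcone hb hb0) ht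

lemma MF_not_interior (hclosed : IsClosed C) (hpointed : ∀ x, x ∈ C → -x ∈ C → x = 0)
    (hcone : ∀ x ∈ C, ∀ t : ℝ, 0 ≤ t → t • x ∈ C)
    {a b : X} (hb : b ∈ interior C) (hb0 : b ≠ 0) :
    (MF C a b) • b - a ∉ interior C := by
  intro hin
  obtain ⟨ρ, hρ, hball⟩ := interior_ball hin
  set δ : ℝ := ρ / (‖b‖ + 1) with hδ
  have hδpos : 0 < δ := by positivity
  have hmem : (MF C a b) • b - a + (-(δ • b)) ∈ C := by
    apply hball
    rw [norm_neg, norm_smul, Real.norm_eq_abs, abs_of_pos hδpos]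
    rw [hδ, div_mul_eq_mul_div, div_le_iff₀ (by positivity)]
    nlinarith [norm_nonneg b, hρ]
  have heq : (MF C a b) • b - a + (-(δ • b)) = (MF C a b - δ) • b - a := by
    rw [sub_smul]; abel
  rw [heq] at hmem
  have := MF_le hclosed hpointed hcone hb hb0 hmem
  linarith

lemma MF_pos (hclosed : IsClosed C) (hconv : Convex ℝ C)
    (hpointed : ∀ x, x ∈ C → -x ∈ C → x = 0)
    (hcone : ∀ x ∈ C, ∀ t : ℝ, 0 ≤ t → t • x ∈ C)
    {a b : X} (ha : a ∈ interior C) (ha0 : a ≠ 0) (hb : b ∈ interior C) (hb0 : b ≠ 0) :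
    0 < MF C a b := by
  by_contra hle
  push_neg at hle
  have h1 := MF_mem hclosed hpointed hcone (a := a) hb hb0
  have h2 : (-(MF C a b)) • b ∈ C := hcone _ (interior_subset hb) _ (by linarith)
  have h3 : -a ∈ C := by
    have h4 := cone_add hconv hcone h1 h2
    have heq : MF C a b • b - a + -MF C a b • b = -a := by
      rw [neg_smul]; abel
    rwa [heq] at h4
  exact ha0 (hpointed a (interior_subset ha) h3)

end Helpers

set_option maxHeartbeats 4000000

/-- Let C be a closed cone with nonempty interior in a finite-dimensional real
Banach space, let f : int C → int C be order-preserving and subhomogeneous, and suppose f has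
a fixed point in int C. For 0 < λ < 1 let f_λ := λf + (1 − λ)·id. Then for every x ∈ int C
the sequence f_λ^k(x) converges to a fixed point of f. -/
theorem averaged_iterates_converge
    {X : Type*} [NormedAddCommGroup X] [NormedSpace ℝ X] [FiniteDimensional ℝ X]
    (C : Set X) (hC_closed : IsClosed C) (hC_convex : Convex ℝ C)
    (hC_cone : ∀ x ∈ C, ∀ t : ℝ, 0 ≤ t → t • x ∈ C)
    (hC_pointed : ∀ x, x ∈ C → -x ∈ C → x = 0)
    (hC_int : (interior C).Nonempty)
    (f : X → X)
    (hf_maps : ∀ x ∈ interior C, f x ∈ interior C)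
    (hf_mono : ∀ x ∈ interior C, ∀ y ∈ interior C, y - x ∈ C → f y - f x ∈ C)
    (hf_subhom : ∀ x ∈ interior C, ∀ t : ℝ, 1 ≤ t → t • f x - f (t • x) ∈ C)
    (u : X) (hu : u ∈ interior C) (hfu : f u = u)
    (l : ℝ) (hl0 : 0 < l) (hl1 : l < 1) :
    ∀ x ∈ interior C,
      ∃ v ∈ interior C, f v = v ∧
        Tendsto (fun k => (fun z => l • f z + (1 - l) • z)^[k] x) atTop (𝓝 v) := by
  classical
  rcases subsingleton_or_nontrivial X with hS | hNT
  · intro x hx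
    refine ⟨u, hu, hfu, ?_⟩
    have hconst : (fun k => (fun z => l • f z + (1 - l) • z)^[k] x) = fun _ => u := by
      funext k; exact Subsingleton.elim _ _
    rw [hconst]
    exact tendsto_const_nhds
  intro x hx
  set g : X → X := fun z => l • f z + (1 - l) • z with hgdef
  -- abbreviations
  have hsm : ∀ {c : ℝ} {w : X}, 0 ≤ c → w ∈ C → c • w ∈ C := fun hc hw => hC_cone _ hw _ hc
  have hadd : ∀ {a b : X}, a ∈ C → b ∈ C → a + b ∈ C :=
    fun ha hb => cone_add hC_convex hC_cone ha hb
  have hne0 : ∀ {w : X}, w ∈ interior C → w ≠ 0 := by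
    intro w hw hw0
    rw [hw0] at hw
    obtain ⟨ρ, hρ, hball⟩ := interior_ball hw
    obtain ⟨w₀, hw₀⟩ := exists_ne (0 : X)
    have hw₀pos : 0 < ‖w₀‖ := norm_pos_iff.2 hw₀
    have hρwpos : 0 < ρ/‖w₀‖ := div_pos hρ hw₀pos
    have h1 : (ρ/‖w₀‖) • w₀ ∈ C := by
      have := hball ((ρ/‖w₀‖) • w₀) ?_
      · simpa using this
      · rw [norm_smul, Real.norm_eq_abs, abs_of_pos hρwpos]
        rw [div_mul_cancel₀ _ hw₀pos.ne']
    have h2 : -((ρ/‖w₀‖) • w₀) ∈ C := by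
      have := hball (-((ρ/‖w₀‖) • w₀)) ?_
      · simpa using this
      · rw [norm_neg, norm_smul, Real.norm_eq_abs, abs_of_pos hρwpos]
        rw [div_mul_cancel₀ _ hw₀pos.ne']
    have := hC_pointed _ h1 h2
    have hρw : (ρ/‖w₀‖) ≠ 0 := hρwpos.ne'
    exact hw₀ (by
      have := smul_eq_zero.1 this
      rcases this with h | h
      · exact absurd h hρw
      · exact h)
  -- M wrappers
  have Mmem : ∀ {a b : X}, b ∈ interior C → (MF C a b) • b - a ∈ C :=
    fun hb => MF_mem hC_closed hC_pointed hC_cone hb (hne0 hb)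
  have Mle : ∀ {a b : X}, b ∈ interior C → ∀ {t : ℝ}, t • b - a ∈ C → MF C a b ≤ t := by
    intro a b hb t ht
    exact MF_le hC_closed hC_pointed hC_cone hb (hne0 hb) ht
  have Mnint : ∀ {a b : X}, b ∈ interior C → (MF C a b) • b - a ∉ interior C :=
    fun hb => MF_not_interior hC_closed hC_pointed hC_cone hb (hne0 hb)
  have Mpos : ∀ {a b : X}, a ∈ interior C → b ∈ interior C → 0 < MF C a b :=
    fun ha hb => MF_pos hC_closed hC_convex hC_pointed hC_cone ha (hne0 ha) hb (hne0 hb)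
  -- superhomogeneity
  have hsuper : ∀ w ∈ interior C, ∀ σ : ℝ, 0 < σ → σ ≤ 1 → f (σ • w) - σ • f w ∈ C := by
    intro w hw σ hσ0 hσ1
    have hσw : σ • w ∈ interior C := interior_smul_pos hC_cone hσ0 hw
    have h := hf_subhom (σ • w) hσw (1/σ) (by rw [le_div_iff₀ hσ0]; linarith)
    rw [smul_smul, one_div, inv_mul_cancel₀ hσ0.ne', one_smul] at h
    have h2 := hsm hσ0.le h
    rw [smul_sub, smul_smul, mul_inv_cancel₀ hσ0.ne', one_smul] at h2
    exact h2
  -- interior invariance of g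
  have hg_int : ∀ w ∈ interior C, g w ∈ interior C := by
    intro w hw
    have h1 : l • f w ∈ interior C := interior_smul_pos hC_cone hl0 (hf_maps w hw)
    have h2 : (1 - l) • w ∈ C := hsm (by linarith) (interior_subset hw)
    exact interior_add_cone hC_convex hC_cone h1 h2
  -- choice of s and t
  obtain ⟨ρx, hρx, hballx⟩ := interior_ball hx
  obtain ⟨ρu, hρu, hballu⟩ := interior_ball hu
  set s : ℝ := min 1 (ρx / (‖u‖ + 1)) with hsdef
  have hs0 : 0 < s := by
    apply lt_min one_pos
    positivity
  have hs1 : s ≤ 1 := min_le_left _ _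
  have hsu_le : x - s • u ∈ C := by
    have := hballx (-(s • u)) ?_
    · simpa [sub_eq_add_neg] using this
    · rw [norm_neg, norm_smul, Real.norm_eq_abs, abs_of_pos hs0]
      have h1 : s ≤ ρx / (‖u‖ + 1) := min_le_right _ _
      have h2 : s * ‖u‖ ≤ (ρx / (‖u‖ + 1)) * ‖u‖ :=
        mul_le_mul_of_nonneg_right h1 (norm_nonneg u)
      have h3 : (ρx / (‖u‖ + 1)) * ‖u‖ ≤ ρx := by
        rw [div_mul_eq_mul_div, div_le_iff₀ (by positivity)]
        nlinarith [norm_nonneg u]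
      linarith
  set t : ℝ := max 1 (‖x‖ / ρu + 1) with htdef
  have ht1 : 1 ≤ t := le_max_left _ _
  have ht0 : 0 < t := lt_of_lt_of_le one_pos ht1
  have hx_le_tu : t • u - x ∈ C := by
    have hmem : u + (-(t⁻¹ • x)) ∈ C := by
      apply hballu
      rw [norm_neg, norm_smul, norm_inv, Real.norm_eq_abs, abs_of_pos ht0]
      rw [inv_mul_le_iff₀ ht0]
      have h1 : ‖x‖ / ρu + 1 ≤ t := le_max_right _ _
      have h2 : ρu * (‖x‖/ρu) = ‖x‖ := by field_simp
      nlinarith [hρu]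
    have := hsm ht0.le hmem
    rw [smul_add, smul_neg, smul_smul, mul_inv_cancel₀ ht0.ne', one_smul] at this
    rwa [← sub_eq_add_neg] at this
  have hsu_int : s • u ∈ interior C := interior_smul_pos hC_cone hs0 hu
  have htu_int : t • u ∈ interior C := interior_smul_pos hC_cone ht0 hu
  -- f (s•u) ≥ s•u  and f(t•u) ≤ t•u
  have hfsu : f (s • u) - s • u ∈ C := by
    have h := hsuper u hu s hs0 hs1
    rw [hfu] at h
    exact h
  have hftu : t • u - f (t • u) ∈ C := by
    have h := hf_subhom u hu t ht1
    rw [hfu] at h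
    exact h
  -- step preservation
  have hstep_low : ∀ w ∈ interior C, w - s • u ∈ C → g w - s • u ∈ C := by
    intro w hw hws
    have h1 : f w - f (s • u) ∈ C := hf_mono (s • u) hsu_int w hw hws
    have h2 : f w - s • u ∈ C := by
      have := hadd h1 hfsu
      rwa [sub_add_sub_cancel] at this
    have h3 : l • (f w - s • u) + (1 - l) • (w - s • u) ∈ C :=
      hadd (hsm hl0.le h2) (hsm (by linarith) hws)
    have heq : l • (f w - s • u) + (1 - l) • (w - s • u) = g w - s • u := by
      simp only [hgdef, smul_sub]
      module
    rwa [heq] at h3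
  have hstep_high : ∀ w ∈ interior C, t • u - w ∈ C → t • u - g w ∈ C := by
    intro w hw hwt
    have h1 : f (t • u) - f w ∈ C := hf_mono w hw (t • u) htu_int hwt
    have h2 : t • u - f w ∈ C := by
      have := hadd hftu h1
      rwa [sub_add_sub_cancel] at this
    have h3 : l • (t • u - f w) + (1 - l) • (t • u - w) ∈ C :=
      hadd (hsm hl0.le h2) (hsm (by linarith) hwt)
    have heq : l • (t • u - f w) + (1 - l) • (t • u - w) = t • u - g w := by
      simp only [hgdef, smul_sub]
      module
    rwa [heq] at h3
  -- the orbit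
  set xx : ℕ → X := fun k => g^[k] x with hxxdef
  have hxx0 : xx 0 = x := rfl
  have hxxs : ∀ k, xx (k+1) = g (xx k) := by
    intro k
    simp only [hxxdef, Function.iterate_succ_apply']
  have hInv : ∀ k, (xx k - s • u ∈ C) ∧ (t • u - xx k ∈ C) ∧ xx k ∈ interior C := by
    intro k
    induction k with
    | zero => exact ⟨hsu_le, hx_le_tu, hx⟩
    | succ n ih =>
      obtain ⟨h1, h2, h3⟩ := ih
      refine ⟨?_, ?_, ?_⟩ <;> rw [hxxs n]
      · exact hstep_low _ h3 h1
      · exact hstep_high _ h3 h2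
      · exact hg_int _ h3
  have hxx_int : ∀ k, xx k ∈ interior C := fun k => (hInv k).2.2
  -- alpha and beta
  set al : X → ℝ := fun w => MF C (f w) w with haldef
  set be : X → ℝ := fun w => MF C w (f w) with hbedef
  have hal_pos : ∀ w ∈ interior C, 0 < al w := fun w hw => Mpos (hf_maps w hw) hw
  have hbe_pos : ∀ w ∈ interior C, 0 < be w := fun w hw => Mpos hw (hf_maps w hw)
  have hal_mem : ∀ w ∈ interior C, (al w) • w - f w ∈ C := fun w hw => Mmem hw
  have hbe_mem : ∀ w ∈ interior C, (be w) • f w - w ∈ C := fun w hw => Mmem (hf_maps w hw)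
  -- Claim A : max (al (g w)) 1 ≤ max (al w) 1
  have claimA : ∀ w ∈ interior C, max (al (g w)) 1 ≤ max (al w) 1 := by
    intro w hw
    set a := al w with hadef
    have hfw := hf_maps w hw
    have hfa : a • w - f w ∈ C := hal_mem w hw
    have hapos : 0 < a := hal_pos w hw
    have hgw : g w ∈ interior C := hg_int w hw
    rcases le_or_gt 1 a with h1a | h1a
    · -- a ≥ 1 : show al (g w) ≤ a
      set c : ℝ := l * a + (1 - l) with hcdef
      have hc1 : 1 ≤ c := by nlinarith
      have hcpos : 0 < c := by linarith
      have e1 : c • w - g w = l • (a • w - f w) := by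
        simp only [hgdef, hcdef, smul_sub, add_smul, smul_smul]
        module
      have h_gw_le : c • w - g w ∈ C := by rw [e1]; exact hsm hl0.le hfa
      have hcw_int : c • w ∈ interior C := interior_smul_pos hC_cone hcpos hw
      have m1 : f (c • w) - f (g w) ∈ C := hf_mono (g w) hgw (c • w) hcw_int h_gw_le
      have m2 : c • f w - f (c • w) ∈ C := hf_subhom w hw c hc1
      have m3 : c • f w - f (g w) ∈ C := by
        have := hadd m2 m1
        rwa [sub_add_sub_cancel] at this
      have e2 : a • g w - c • f w = (1 - l) • (a • w - f w) := by
        simp only [hgdef, hcdef, smul_add, smul_sub, smul_smul]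
        module
      have h4 : a • g w - c • f w ∈ C := by rw [e2]; exact hsm (by linarith) hfa
      have h5 : a • g w - f (g w) ∈ C := by
        have := hadd h4 m3
        rwa [sub_add_sub_cancel] at this
      have hle : al (g w) ≤ a := Mle hgw h5
      calc max (al (g w)) 1 ≤ max a 1 := max_le_max hle le_rfl
        _ = max (al w) 1 := rfl
    · -- a < 1 : show al (g w) ≤ 1
      set c : ℝ := l * a + (1 - l) with hcdef
      have hcpos : 0 < c := by nlinarith
      have hc1 : c < 1 := by nlinarith
      have e1 : c • w - g w = l • (a • w - f w) := by
        simp only [hgdef, hcdef, smul_sub, add_smul, smul_smul]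
        module
      have h_gw_le_cw : c • w - g w ∈ C := by rw [e1]; exact hsm hl0.le hfa
      have hwc : w - c • w ∈ C := by
        have : w - c • w = (1 - c) • w := by module
        rw [this]; exact hsm (by linarith) (interior_subset hw)
      have h_gw_le_w : w - g w ∈ C := by
        have := hadd hwc h_gw_le_cw
        rwa [sub_add_sub_cancel] at this
      have m1 : f w - f (g w) ∈ C := hf_mono (g w) hgw w hw h_gw_le_w
      have hwfw : w - f w ∈ C := by
        have h6 : w - a • w = (1 - a) • w := by module
        have h7 : w - a • w ∈ C := by rw [h6]; exact hsm (by linarith) (interior_subset hw)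
        have := hadd h7 hfa
        rwa [sub_add_sub_cancel] at this
      have m2 : g w - f w ∈ C := by
        have e2 : g w - f w = (1 - l) • (w - f w) := by
          simp only [hgdef, smul_sub]
          module
        rw [e2]; exact hsm (by linarith) hwfw
      have h5 : (1:ℝ) • g w - f (g w) ∈ C := by
        rw [one_smul]
        have := hadd m2 m1
        rwa [sub_add_sub_cancel] at this
      have hle : al (g w) ≤ 1 := Mle hgw h5
      have : max (al (g w)) 1 = 1 := max_eq_right hle
      rw [this]
      exact le_max_right _ _
  -- Claim B : max (be (g w)) 1 ≤ max (be w) 1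
  have claimB : ∀ w ∈ interior C, max (be (g w)) 1 ≤ max (be w) 1 := by
    intro w hw
    set b := be w with hbdef2
    have hfw := hf_maps w hw
    have hfb : b • f w - w ∈ C := hbe_mem w hw
    have hbpos : 0 < b := hbe_pos w hw
    have hgw : g w ∈ interior C := hg_int w hw
    have hfgw : f (g w) ∈ interior C := hf_maps (g w) hgw
    rcases le_or_gt 1 b with h1b | h1b
    · -- b ≥ 1 : show be (g w) ≤ b
      set d : ℝ := l + (1 - l) * b with hddef
      have hd1 : 1 ≤ d := by nlinarith
      have hdb : d ≤ b := by nlinarith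
      have e1 : d • f w - g w = (1 - l) • (b • f w - w) := by
        simp only [hgdef, hddef, smul_sub, add_smul, smul_smul]
        module
      have h1 : d • f w - g w ∈ C := by rw [e1]; exact hsm (by linarith) hfb
      have e2' : b • g w - d • w = l • (b • f w - w) := by
        simp only [hgdef, hddef, smul_sub, smul_add, add_smul, smul_smul]
        module
      have h2' : b • g w - d • w ∈ C := by rw [e2']; exact hsm hl0.le hfb
      have e2 : g w - (d/b) • w = b⁻¹ • (b • g w - d • w) := by
        rw [smul_sub, smul_smul, smul_smul, inv_mul_cancel₀ hbpos.ne', one_smul,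
          div_eq_inv_mul]
      have h2 : g w - (d/b) • w ∈ C := by
        rw [e2]; exact hsm (inv_nonneg.2 hbpos.le) h2'
      have hσpos : 0 < d/b := by positivity
      have hσ1 : d/b ≤ 1 := by
        rw [div_le_one hbpos]; exact hdb
      have hσw_int : (d/b) • w ∈ interior C := interior_smul_pos hC_cone hσpos hw
      have m1 : f (g w) - f ((d/b) • w) ∈ C := hf_mono ((d/b) • w) hσw_int (g w) hgw h2
      have m2 : f ((d/b) • w) - (d/b) • f w ∈ C := hsuper w hw (d/b) hσpos hσ1
      have m3 : f (g w) - (d/b) • f w ∈ C := by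
        have := hadd m1 m2
        rwa [sub_add_sub_cancel] at this
      have m4 : b • f (g w) - d • f w ∈ C := by
        have := hsm hbpos.le m3
        rw [smul_sub, smul_smul] at this
        rw [mul_div_cancel₀ _ hbpos.ne'] at this
        exact this
      have h5 : b • f (g w) - g w ∈ C := by
        have := hadd m4 h1
        rwa [sub_add_sub_cancel] at this
      have hle : be (g w) ≤ b := Mle hfgw h5
      calc max (be (g w)) 1 ≤ max b 1 := max_le_max hle le_rfl
        _ = max (be w) 1 := rfl
    · -- b < 1 : show be (g w) ≤ 1
      have hfww : f w - w ∈ C := by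
        have h6 : f w - b • f w = (1 - b) • f w := by module
        have h7 : f w - b • f w ∈ C := by rw [h6]; exact hsm (by linarith) (interior_subset hfw)
        have := hadd h7 hfb
        rwa [sub_add_sub_cancel] at this
      have h1 : g w - w ∈ C := by
        have e1 : g w - w = l • (f w - w) := by
          simp only [hgdef, smul_sub]
          module
        rw [e1]; exact hsm hl0.le hfww
      have m1 : f (g w) - f w ∈ C := hf_mono w hw (g w) hgw h1
      set d : ℝ := l + (1 - l) * b with hddef
      have hd1 : d < 1 := by nlinarith
      have e1 : d • f w - g w = (1 - l) • (b • f w - w) := by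
        simp only [hgdef, hddef, smul_sub, add_smul, smul_smul]
        module
      have h2 : d • f w - g w ∈ C := by rw [e1]; exact hsm (by linarith) hfb
      have h3 : f w - d • f w ∈ C := by
        have : f w - d • f w = (1 - d) • f w := by module
        rw [this]; exact hsm (by linarith) (interior_subset hfw)
      have h4 : f w - g w ∈ C := by
        have := hadd h3 h2
        rwa [sub_add_sub_cancel] at this
      have h5 : (1:ℝ) • f (g w) - g w ∈ C := by
        rw [one_smul]
        have := hadd m1 h4
        rwa [sub_add_sub_cancel] at this
      have hle : be (g w) ≤ 1 := Mle hfgw h5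
      have : max (be (g w)) 1 = 1 := max_eq_right hle
      rw [this]
      exact le_max_right _ _
  -- norm bound helper
  have norm_two : ∀ (v : X) (K : ℝ), (∀ w, v - w ∈ C → v + w ∈ C → ‖w‖ ≤ K) →
      ∀ (y : X) (δ : ℝ), 0 < δ → δ • v - y ∈ C → δ • v + y ∈ C → ‖y‖ ≤ δ * K := by
    intro v K hK y δ hδ h1 h2
    have e1 : v - δ⁻¹ • y = δ⁻¹ • (δ • v - y) := by
      rw [smul_sub, smul_smul, inv_mul_cancel₀ hδ.ne', one_smul]
    have e2 : v + δ⁻¹ • y = δ⁻¹ • (δ • v + y) := by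
      rw [smul_add, smul_smul, inv_mul_cancel₀ hδ.ne', one_smul]
    have h3 := hK (δ⁻¹ • y) (by rw [e1]; exact hsm (inv_nonneg.2 hδ.le) h1)
      (by rw [e2]; exact hsm (inv_nonneg.2 hδ.le) h2)
    rw [norm_smul, norm_inv, Real.norm_eq_abs, abs_of_pos hδ] at h3
    rw [inv_mul_le_iff₀ hδ] at h3
    linarith [h3]
  -- order sandwich near an interior point
  have sandwich : ∀ winf ∈ interior C, ∃ η > 0, ∀ δ : ℝ, 0 < δ → δ ≤ 1 →
      ∀ w' ∈ interior C, ‖w' - winf‖ ≤ δ * η →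
      ((1+δ) • winf - w' ∈ C ∧ (1+δ) • w' - winf ∈ C ∧
       (1+δ) • f winf - f w' ∈ C ∧ (1+δ) • f w' - f winf ∈ C) := by
    intro winf hwi
    obtain ⟨ρ, hρ, hball⟩ := interior_ball hwi
    refine ⟨ρ/2, by positivity, ?_⟩
    intro δ hδ0 hδ1 w' hw' hclose
    have hδρ : 0 < (1+δ) := by linarith
    have h1 : (1+δ) • winf - w' ∈ C := by
      have e : (1+δ) • winf - w' = δ • (winf + δ⁻¹ • (winf - w')) := by
        rw [smul_add, smul_smul, mul_inv_cancel₀ hδ0.ne', one_smul]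
        module
      rw [e]
      apply hsm hδ0.le
      apply hball
      rw [norm_smul, norm_inv, Real.norm_eq_abs, abs_of_pos hδ0, norm_sub_rev]
      rw [inv_mul_le_iff₀ hδ0]
      calc ‖w' - winf‖ ≤ δ * (ρ/2) := hclose
        _ ≤ δ * ρ := by nlinarith
    have h2 : (1+δ) • w' - winf ∈ C := by
      have e : (1+δ) • w' - winf = δ • (winf + δ⁻¹ • ((1+δ) • (w' - winf))) := by
        rw [smul_add, smul_smul, mul_inv_cancel₀ hδ0.ne', one_smul, smul_sub]
        module
      rw [e]
      apply hsm hδ0.le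
      apply hball
      rw [norm_smul, norm_smul, norm_inv, Real.norm_eq_abs, Real.norm_eq_abs,
        abs_of_pos hδ0, abs_of_pos hδρ]
      rw [inv_mul_le_iff₀ hδ0]
      calc (1+δ) * ‖w' - winf‖ ≤ 2 * (δ * (ρ/2)) := by nlinarith [norm_nonneg (w' - winf)]
        _ = δ * ρ := by ring
    have h1' : (1+δ) • winf ∈ interior C := interior_smul_pos hC_cone hδρ hwi
    have h2' : (1+δ) • w' ∈ interior C := interior_smul_pos hC_cone hδρ hw'
    have hf1 : (1+δ) • f winf - f w' ∈ C := by
      have m1 : f ((1+δ) • winf) - f w' ∈ C := hf_mono w' hw' _ h1' h1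
      have m2 : (1+δ) • f winf - f ((1+δ) • winf) ∈ C := hf_subhom winf hwi _ (by linarith)
      have := hadd m2 m1
      rwa [sub_add_sub_cancel] at this
    have hf2 : (1+δ) • f w' - f winf ∈ C := by
      have m1 : f ((1+δ) • w') - f winf ∈ C := hf_mono winf hwi _ h2' h2
      have m2 : (1+δ) • f w' - f ((1+δ) • w') ∈ C := hf_subhom w' hw' _ (by linarith)
      have := hadd m2 m1
      rwa [sub_add_sub_cancel] at this
    exact ⟨h1, h2, hf1, hf2⟩
  -- sequential continuity of f on the interior
  have seq_f : ∀ (w : ℕ → X) (winf : X), (∀ i, w i ∈ interior C) → winf ∈ interior C →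
      Tendsto w atTop (𝓝 winf) → Tendsto (fun i => f (w i)) atTop (𝓝 (f winf)) := by
    intro w winf hwmem hwi hwt
    obtain ⟨η, hη, hsand⟩ := sandwich winf hwi
    obtain ⟨K, hK, hKb⟩ := order_bound hC_closed hC_pointed hC_cone (f winf)
    rw [Metric.tendsto_atTop] at hwt ⊢
    intro ε hε
    set δ : ℝ := min 1 (ε / (4*K + 4)) with hδdef
    have hδ0 : 0 < δ := by
      apply lt_min one_pos
      positivity
    have hδ1 : δ ≤ 1 := min_le_left _ _
    obtain ⟨N, hN⟩ := hwt (δ * η) (by positivity)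
    refine ⟨N, fun i hi => ?_⟩
    have hdist : ‖w i - winf‖ ≤ δ * η := by
      have := hN i hi
      rw [dist_eq_norm] at this
      linarith
    obtain ⟨h1, h2, hf1, hf2⟩ := hsand δ hδ0 hδ1 (w i) (hwmem i) hdist
    set y : X := f (w i) - f winf with hydef
    have c1 : (2*δ) • f winf - (1+δ) • y ∈ C := by
      have e : (2*δ) • f winf - (1+δ) • y
          = (1+δ) • ((1+δ) • f winf - f (w i)) + (δ*(1-δ)) • f winf := by
        simp only [hydef, smul_sub, smul_smul]
        module
      rw [e]
      exact hadd (hsm (by linarith) hf1) (hsm (by nlinarith) (interior_subset (hf_maps winf hwi)))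
    have c2 : (2*δ) • f winf + (1+δ) • y ∈ C := by
      have e : (2*δ) • f winf + (1+δ) • y = ((1+δ) • f (w i) - f winf) + δ • f winf := by
        simp only [hydef, smul_sub, smul_smul]
        module
      rw [e]
      exact hadd hf2 (hsm (by positivity) (interior_subset (hf_maps winf hwi)))
    have hnorm : ‖(1+δ) • y‖ ≤ (2*δ) * K := norm_two (f winf) K hKb _ (2*δ) (by linarith) c1 c2
    rw [norm_smul, Real.norm_eq_abs, abs_of_pos (by linarith : (0:ℝ) < 1 + δ)] at hnorm
    have hy : ‖y‖ ≤ 2*δ*K := by nlinarith [norm_nonneg y]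
    rw [dist_eq_norm]
    have hfin : 2*δ*K < ε := by
      have hδ2 : δ ≤ ε / (4*K + 4) := min_le_right _ _
      have hδ3 : δ * (4*K + 4) ≤ ε := by
        rw [← le_div_iff₀ (by positivity)]
        exact hδ2
      nlinarith
    calc ‖f (w i) - f winf‖ = ‖y‖ := rfl
      _ ≤ 2*δ*K := hy
      _ < ε := hfin
  -- sequential continuity of al and be
  have seq_al : ∀ (w : ℕ → X) (winf : X), (∀ i, w i ∈ interior C) → winf ∈ interior C →
      Tendsto w atTop (𝓝 winf) → Tendsto (fun i => al (w i)) atTop (𝓝 (al winf)) := by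
    intro w winf hwmem hwi hwt
    obtain ⟨η, hη, hsand⟩ := sandwich winf hwi
    have ha0 : 0 < al winf := hal_pos winf hwi
    rw [Metric.tendsto_atTop] at hwt ⊢
    intro ε hε
    set δ : ℝ := min 1 (ε / (12 * al winf + 1)) with hδdef
    have hδ0 : 0 < δ := lt_min one_pos (by positivity)
    have hδ1 : δ ≤ 1 := min_le_left _ _
    obtain ⟨N, hN⟩ := hwt (δ * η) (by positivity)
    refine ⟨N, fun i hi => ?_⟩
    have hdist : ‖w i - winf‖ ≤ δ * η := by
      have := hN i hi
      rw [dist_eq_norm] at this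
      linarith
    obtain ⟨h1, h2, hf1, hf2⟩ := hsand δ hδ0 hδ1 (w i) (hwmem i) hdist
    have haipos : 0 < al (w i) := hal_pos (w i) (hwmem i)
    have hup : al (w i) ≤ (1+δ)^2 * al winf := by
      apply Mle (hwmem i)
      have e : ((1+δ)^2 * al winf) • (w i) - f (w i) =
          (((1+δ) • f winf - f (w i)) + (1+δ) • (al winf • winf - f winf))
            + ((1+δ) * al winf) • ((1+δ) • (w i) - winf) := by
        simp only [smul_sub, smul_smul, smul_add]
        module
      rw [e]
      exact hadd (hadd hf1 (hsm (by linarith) (hal_mem winf hwi)))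
        (hsm (by positivity) h2)
    have hlo : al winf ≤ (1+δ)^2 * al (w i) := by
      apply Mle hwi
      have e : ((1+δ)^2 * al (w i)) • winf - f winf =
          (((1+δ) • f (w i) - f winf) + (1+δ) • (al (w i) • (w i) - f (w i)))
            + ((1+δ) * al (w i)) • ((1+δ) • winf - w i) := by
        simp only [smul_sub, smul_smul, smul_add]
        module
      rw [e]
      exact hadd (hadd hf2 (hsm (by linarith) (hal_mem (w i) (hwmem i))))
        (hsm (by positivity) h1)
    rw [Real.dist_eq, abs_lt]
    have hδ2 : δ * (12 * al winf + 1) ≤ ε := by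
      rw [← le_div_iff₀ (by positivity)]
      exact min_le_right _ _
    have hsq : (1+δ)^2 ≤ 4 := by nlinarith
    have hco : (1+δ)^2 - 1 ≤ 3*δ := by nlinarith
    have h4 : al (w i) ≤ 4 * al winf :=
      hup.trans (mul_le_mul_of_nonneg_right hsq ha0.le)
    have hg1 : al winf - al (w i) ≤ 3*δ * al (w i) := by
      nlinarith [mul_le_mul_of_nonneg_right hco haipos.le]
    have hg2 : al (w i) - al winf ≤ 3*δ * al winf := by
      nlinarith [mul_le_mul_of_nonneg_right hco ha0.le]
    have h5 : 3*δ * al (w i) ≤ 3*δ * (4 * al winf) :=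
      mul_le_mul_of_nonneg_left h4 (by positivity)
    constructor
    · nlinarith
    · nlinarith
  have seq_be : ∀ (w : ℕ → X) (winf : X), (∀ i, w i ∈ interior C) → winf ∈ interior C →
      Tendsto w atTop (𝓝 winf) → Tendsto (fun i => be (w i)) atTop (𝓝 (be winf)) := by
    intro w winf hwmem hwi hwt
    obtain ⟨η, hη, hsand⟩ := sandwich winf hwi
    have hb0 : 0 < be winf := hbe_pos winf hwi
    rw [Metric.tendsto_atTop] at hwt ⊢
    intro ε hε
    set δ : ℝ := min 1 (ε / (12 * be winf + 1)) with hδdef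
    have hδ0 : 0 < δ := lt_min one_pos (by positivity)
    have hδ1 : δ ≤ 1 := min_le_left _ _
    obtain ⟨N, hN⟩ := hwt (δ * η) (by positivity)
    refine ⟨N, fun i hi => ?_⟩
    have hdist : ‖w i - winf‖ ≤ δ * η := by
      have := hN i hi
      rw [dist_eq_norm] at this
      linarith
    obtain ⟨h1, h2, hf1, hf2⟩ := hsand δ hδ0 hδ1 (w i) (hwmem i) hdist
    have hbipos : 0 < be (w i) := hbe_pos (w i) (hwmem i)
    have hup : be (w i) ≤ (1+δ)^2 * be winf := by
      apply Mle (hf_maps (w i) (hwmem i))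
      have e : ((1+δ)^2 * be winf) • f (w i) - (w i) =
          (((1+δ) • winf - w i) + (1+δ) • (be winf • f winf - winf))
            + ((1+δ) * be winf) • ((1+δ) • f (w i) - f winf) := by
        simp only [smul_sub, smul_smul, smul_add]
        module
      rw [e]
      exact hadd (hadd h1 (hsm (by linarith) (hbe_mem winf hwi)))
        (hsm (by positivity) hf2)
    have hlo : be winf ≤ (1+δ)^2 * be (w i) := by
      apply Mle (hf_maps winf hwi)
      have e : ((1+δ)^2 * be (w i)) • f winf - winf =
          (((1+δ) • (w i) - winf) + (1+δ) • (be (w i) • f (w i) - w i))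
            + ((1+δ) * be (w i)) • ((1+δ) • f winf - f (w i)) := by
        simp only [smul_sub, smul_smul, smul_add]
        module
      rw [e]
      exact hadd (hadd h2 (hsm (by linarith) (hbe_mem (w i) (hwmem i))))
        (hsm (by positivity) hf1)
    rw [Real.dist_eq, abs_lt]
    have hδ2 : δ * (12 * be winf + 1) ≤ ε := by
      rw [← le_div_iff₀ (by positivity)]
      exact min_le_right _ _
    have hsq : (1+δ)^2 ≤ 4 := by nlinarith
    have hco : (1+δ)^2 - 1 ≤ 3*δ := by nlinarith
    have h4 : be (w i) ≤ 4 * be winf :=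
      hup.trans (mul_le_mul_of_nonneg_right hsq hb0.le)
    have hg1 : be winf - be (w i) ≤ 3*δ * be (w i) := by
      nlinarith [mul_le_mul_of_nonneg_right hco hbipos.le]
    have hg2 : be (w i) - be winf ≤ 3*δ * be winf := by
      nlinarith [mul_le_mul_of_nonneg_right hco hb0.le]
    have h5 : 3*δ * be (w i) ≤ 3*δ * (4 * be winf) :=
      mul_le_mul_of_nonneg_left h4 (by positivity)
    constructor
    · nlinarith
    · nlinarith
  -- monotone sequences of maxima
  set Aseq : ℕ → ℝ := fun k => max (al (xx k)) 1 with hAseqdef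
  set Bseq : ℕ → ℝ := fun k => max (be (xx k)) 1 with hBseqdef
  have hAanti : Antitone Aseq := by
    apply antitone_nat_of_succ_le
    intro k
    have := claimA (xx k) (hxx_int k)
    rw [← hxxs k] at this
    calc Aseq (k+1) = max (al (xx (k+1))) 1 := rfl
      _ ≤ max (al (xx k)) 1 := this
      _ = Aseq k := rfl
  have hBanti : Antitone Bseq := by
    apply antitone_nat_of_succ_le
    intro k
    have := claimB (xx k) (hxx_int k)
    rw [← hxxs k] at this
    exact this
  have hAbdd : BddBelow (Set.range Aseq) := by
    refine ⟨1, ?_⟩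
    rintro y ⟨k, rfl⟩
    exact le_max_right _ _
  have hBbdd : BddBelow (Set.range Bseq) := by
    refine ⟨1, ?_⟩
    rintro y ⟨k, rfl⟩
    exact le_max_right _ _
  set ainf : ℝ := ⨅ k, Aseq k with hainfdef
  set binf : ℝ := ⨅ k, Bseq k with hbinfdef
  have hAtend : Tendsto Aseq atTop (𝓝 ainf) := tendsto_atTop_ciInf hAanti hAbdd
  have hBtend : Tendsto Bseq atTop (𝓝 binf) := tendsto_atTop_ciInf hBanti hBbdd
  have hainf1 : 1 ≤ ainf := le_ciInf fun k => le_max_right _ _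
  have hbinf1 : 1 ≤ binf := le_ciInf fun k => le_max_right _ _
  have hAge : ∀ k, ainf ≤ Aseq k := fun k => ciInf_le hAbdd k
  have hBge : ∀ k, binf ≤ Bseq k := fun k => ciInf_le hBbdd k
  -- bounded orbit & cluster point
  obtain ⟨K, hKpos, hKb⟩ := order_bound hC_closed hC_pointed hC_cone (t • u - s • u)
  have htsu : t • u - s • u ∈ C := by
    have : t • u - s • u = (t - s) • u := by module
    rw [this]
    exact hsm (by linarith) (interior_subset hu)
  have hxxball : ∀ k, xx k ∈ Metric.closedBall (0:X) (K + ‖s • u‖) := by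
    intro k
    obtain ⟨h1, h2, _⟩ := hInv k
    have hb1 : (t • u - s • u) - (xx k - s • u) ∈ C := by
      have e : (t • u - s • u) - (xx k - s • u) = t • u - xx k := by abel
      rw [e]; exact h2
    have hb2 : (t • u - s • u) + (xx k - s • u) ∈ C := by
      have e : (t • u - s • u) + (xx k - s • u) = (xx k - s • u) + (t • u - s • u) := by abel
      rw [e]; exact hadd h1 htsu
    have := hKb _ hb1 hb2
    rw [Metric.mem_closedBall, dist_eq_norm, sub_zero]
    calc ‖xx k‖ = ‖(xx k - s • u) + s • u‖ := by rw [sub_add_cancel]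
      _ ≤ ‖xx k - s • u‖ + ‖s • u‖ := norm_add_le _ _
      _ ≤ K + ‖s • u‖ := by linarith
  obtain ⟨z, _, φ, hφ, hφt⟩ :=
    (isCompact_closedBall (0:X) (K + ‖s • u‖)).tendsto_subseq hxxball
  have hz_low : z - s • u ∈ C := by
    apply hC_closed.mem_of_tendsto (hφt.sub_const (s • u))
    exact Eventually.of_forall fun i => (hInv (φ i)).1
  have hz_high : t • u - z ∈ C := by
    apply hC_closed.mem_of_tendsto (tendsto_const_nhds.sub hφt)
    exact Eventually.of_forall fun i => (hInv (φ i)).2.1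
  have hz_int : z ∈ interior C := by
    have := interior_add_cone hC_convex hC_cone hsu_int hz_low
    simpa using this
  have hφtop : Tendsto φ atTop atTop := hφ.tendsto_atTop
  -- the orbit of z
  set Zs : ℕ → X := fun j => g^[j] z with hZsdef
  have hZ0 : Zs 0 = z := rfl
  have hZss : ∀ j, Zs (j+1) = g (Zs j) := by
    intro j
    simp only [hZsdef, Function.iterate_succ_apply']
  have hZinv : ∀ j, (Zs j - s • u ∈ C) ∧ (t • u - Zs j ∈ C) ∧ Zs j ∈ interior C := by
    intro j
    induction j with
    | zero => exact ⟨hz_low, hz_high, hz_int⟩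
    | succ n ih =>
      obtain ⟨h1, h2, h3⟩ := ih
      refine ⟨?_, ?_, ?_⟩ <;> rw [hZss n]
      · exact hstep_low _ h3 h1
      · exact hstep_high _ h3 h2
      · exact hg_int _ h3
  have hZint : ∀ j, Zs j ∈ interior C := fun j => (hZinv j).2.2
  have hshift : ∀ j, Tendsto (fun i => xx (φ i + j)) atTop (𝓝 (Zs j)) := by
    intro j
    induction j with
    | zero => rw [hZ0]; exact hφt
    | succ n ih =>
      have he : (fun i => xx (φ i + (n+1))) = fun i => g (xx (φ i + n)) := by
        funext i
        rw [show φ i + (n+1) = (φ i + n) + 1 by ring, hxxs]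
      rw [he]
      have hf_t : Tendsto (fun i => f (xx (φ i + n))) atTop (𝓝 (f (Zs n))) :=
        seq_f _ _ (fun i => hxx_int _) (hZint n) ih
      have : Tendsto (fun i => l • f (xx (φ i + n)) + (1 - l) • xx (φ i + n)) atTop
          (𝓝 (l • f (Zs n) + (1 - l) • Zs n)) :=
        (hf_t.const_smul l).add (ih.const_smul (1 - l))
      rw [hZss n]
      exact this
  -- CASE 1 : ainf > 1 is impossible
  rcases lt_or_ge 1 ainf with hA1 | hA1
  · exfalso
    have halk : ∀ k, al (xx k) = Aseq k := by
      intro k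
      have h1 := hAge k
      rcases le_or_gt (al (xx k)) 1 with hcase | hcase
      · exfalso
        have : Aseq k = 1 := max_eq_right hcase
        rw [this] at h1
        linarith
      · exact (max_eq_left hcase.le).symm
    have haltend : Tendsto (fun k => al (xx k)) atTop (𝓝 ainf) :=
      hAtend.congr fun k => (halk k).symm
    have halZ : ∀ j, al (Zs j) = ainf := by
      intro j
      have h1 : Tendsto (fun i => al (xx (φ i + j))) atTop (𝓝 (al (Zs j))) :=
        seq_al _ _ (fun i => hxx_int _) (hZint j) (hshift j)
      have h2 : Tendsto (fun i => al (xx (φ i + j))) atTop (𝓝 ainf) :=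
        haltend.comp (tendsto_atTop_mono (fun i => Nat.le_add_right (φ i) j) hφtop)
      exact tendsto_nhds_unique h1 h2
    set cp : ℝ := l * ainf + (1 - l) with hcpdef
    have hcp1 : 1 < cp := by nlinarith
    have hEC : ∀ j, ainf • Zs j - f (Zs j) ∈ C := by
      intro j
      have := hal_mem (Zs j) (hZint j)
      rwa [halZ j] at this
    have hTC : ∀ j, cp • f (Zs j) - f (Zs (j+1)) ∈ C := by
      intro j
      have h1 : cp • Zs j - Zs (j+1) = l • (ainf • Zs j - f (Zs j)) := by
        rw [hZss j]
        simp only [hgdef, hcpdef, smul_add, smul_sub, smul_smul, add_smul]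
        module
      have h1' : cp • Zs j - Zs (j+1) ∈ C := by rw [h1]; exact hsm hl0.le (hEC j)
      have hcpZ : cp • Zs j ∈ interior C :=
        interior_smul_pos hC_cone (by linarith) (hZint j)
      have m1 : f (cp • Zs j) - f (Zs (j+1)) ∈ C := hf_mono _ (hZint (j+1)) _ hcpZ h1'
      have m2 : cp • f (Zs j) - f (cp • Zs j) ∈ C := hf_subhom _ (hZint j) cp (by linarith)
      have := hadd m2 m1
      rwa [sub_add_sub_cancel] at this
    obtain ⟨p, hp⟩ := pow_unbounded_of_one_lt (t/s) hcp1
    have hEp_nint : ainf • Zs p - f (Zs p) ∉ interior C := by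
      have h' : al (Zs p) • Zs p - f (Zs p) ∉ interior C := Mnint (a := f (Zs p)) (hZint p)
      rwa [halZ p] at h' 
    obtain ⟨ℓ, hℓC, hℓ0, hℓpos⟩ := support_exists hC_convex hC_cone hC_int (hEC p) hEp_nint
    have hdown : ∀ i, i ≤ p → ℓ (ainf • Zs (p - i) - f (Zs (p - i))) = 0 := by
      intro i
      induction i with
      | zero => intro _; simpa using hℓ0
      | succ n ih =>
        intro hnp
        have hn : n ≤ p := by omega
        have hpn : p - n = (p - (n+1)) + 1 := by omega
        have hid : ainf • Zs ((p - (n+1)) + 1) - f (Zs ((p - (n+1)) + 1)) =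
            (1 - l) • (ainf • Zs (p - (n+1)) - f (Zs (p - (n+1))))
            + (cp • f (Zs (p - (n+1))) - f (Zs ((p - (n+1)) + 1))) := by
          rw [hZss (p - (n+1))]
          simp only [hgdef, hcpdef, smul_add, smul_sub, smul_smul, add_smul]
          module
        have h0 := ih hn
        rw [hpn, hid, map_add] at h0
        have hx1 : 0 ≤ ℓ ((1 - l) • (ainf • Zs (p - (n+1)) - f (Zs (p - (n+1))))) :=
          hℓC _ (hsm (by linarith) (hEC _))
        have hx2 : 0 ≤ ℓ (cp • f (Zs (p-(n+1))) - f (Zs ((p-(n+1))+1))) := hℓC _ (hTC _)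
        have hval : ℓ ((1-l) • (ainf • Zs (p-(n+1)) - f (Zs (p-(n+1))))) = 0 := by linarith
        rw [map_smul] at hval
        simp only [smul_eq_mul] at hval
        rcases mul_eq_zero.1 hval with h | h
        · exfalso; linarith
        · exact h
    have hE0 : ∀ j, j ≤ p → ℓ (f (Zs j)) = ainf * ℓ (Zs j) := by
      intro j hj
      have := hdown (p - j) (by omega)
      rw [show p - (p - j) = j by omega, map_sub, map_smul] at this
      simp only [smul_eq_mul] at this
      linarith
    have hgrow : ∀ j, j ≤ p → ℓ (Zs j) = cp ^ j * ℓ z := by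
      intro j
      induction j with
      | zero => intro _; simp [hZ0]
      | succ n ih =>
        intro hnp
        have hn : n ≤ p := by omega
        have h1 : ℓ (Zs (n+1)) = l * ℓ (f (Zs n)) + (1 - l) * ℓ (Zs n) := by
          rw [hZss n]
          simp only [hgdef, map_add, map_smul, smul_eq_mul]
        rw [h1, hE0 n hn, ih hn, pow_succ, hcpdef]
        ring
    have hub : ℓ (Zs p) ≤ t * ℓ u := by
      have h1 := hℓC _ (hZinv p).2.1
      rw [map_sub, map_smul] at h1
      simp only [smul_eq_mul] at h1
      linarith
    have hlb : s * ℓ u ≤ ℓ z := by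
      have h1 := hℓC _ hz_low
      rw [map_sub, map_smul] at h1
      simp only [smul_eq_mul] at h1
      linarith
    have hupos : 0 < ℓ u := hℓpos u hu
    have hgp := hgrow p le_rfl
    have hcppow : 0 < cp ^ p := pow_pos (by linarith) p
    have h2 : (cp ^ p * s) * ℓ u ≤ t * ℓ u := by
      calc (cp ^ p * s) * ℓ u = cp ^ p * (s * ℓ u) := by ring
        _ ≤ cp ^ p * ℓ z := mul_le_mul_of_nonneg_left hlb hcppow.le
        _ = ℓ (Zs p) := hgp.symm
        _ ≤ t * ℓ u := hub
    have h3 : cp ^ p * s ≤ t := le_of_mul_le_mul_right h2 hupos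
    have h4 : t < cp ^ p * s := by
      rw [div_lt_iff₀ hs0] at hp
      linarith
    linarith
  have hainf_eq : ainf = 1 := le_antisymm hA1 hainf1
  -- CASE 2 : binf > 1 is impossible
  rcases lt_or_ge 1 binf with hB1 | hB1
  · exfalso
    have hbinfpos : 0 < binf := by linarith
    have hbek : ∀ k, be (xx k) = Bseq k := by
      intro k
      have h1 := hBge k
      rcases le_or_gt (be (xx k)) 1 with hcase | hcase
      · exfalso
        have : Bseq k = 1 := max_eq_right hcase
        rw [this] at h1
        linarith
      · exact (max_eq_left hcase.le).symm
    have hbetend : Tendsto (fun k => be (xx k)) atTop (𝓝 binf) :=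
      hBtend.congr fun k => (hbek k).symm
    have hbeZ : ∀ j, be (Zs j) = binf := by
      intro j
      have h1 : Tendsto (fun i => be (xx (φ i + j))) atTop (𝓝 (be (Zs j))) :=
        seq_be _ _ (fun i => hxx_int _) (hZint j) (hshift j)
      have h2 : Tendsto (fun i => be (xx (φ i + j))) atTop (𝓝 binf) :=
        hbetend.comp (tendsto_atTop_mono (fun i => Nat.le_add_right (φ i) j) hφtop)
      exact tendsto_nhds_unique h1 h2
    set cm : ℝ := l / binf + (1 - l) with hcmdef
    have hldb : 0 < l / binf := div_pos hl0 hbinfpos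
    have hcm0 : 0 < cm := by rw [hcmdef]; linarith
    have hcm1 : cm < 1 := by
      have : l / binf < l := by
        rw [div_lt_iff₀ hbinfpos]
        nlinarith
      rw [hcmdef]
      linarith
    have hmul : binf * cm = l + (1 - l) * binf := by
      rw [hcmdef]
      field_simp
    have hEC : ∀ j, binf • f (Zs j) - Zs j ∈ C := by
      intro j
      have := hbe_mem (Zs j) (hZint j)
      rwa [hbeZ j] at this
    have hTC : ∀ j, f (Zs (j+1)) - cm • Zs j ∈ C → True := fun _ _ => trivial
    have hstep1 : ∀ j, Zs (j+1) - cm • Zs j ∈ C := by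
      intro j
      have h1 : binf • Zs (j+1) - (l + (1 - l) * binf) • Zs j = l • (binf • f (Zs j) - Zs j) := by
        rw [hZss j]
        simp only [hgdef, smul_add, smul_sub, smul_smul, add_smul]
        module
      have h1' : binf • Zs (j+1) - (l + (1 - l) * binf) • Zs j ∈ C := by
        rw [h1]; exact hsm hl0.le (hEC j)
      have e : Zs (j+1) - cm • Zs j = binf⁻¹ • (binf • Zs (j+1) - (l + (1 - l) * binf) • Zs j) := by
        rw [smul_sub, smul_smul, smul_smul, inv_mul_cancel₀ hbinfpos.ne', one_smul, hcmdef]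
        congr 1
        rw [div_add' _ _ _ hbinfpos.ne']
        rw [div_eq_inv_mul]
      rw [e]
      exact hsm (inv_nonneg.2 hbinfpos.le) h1'
    have hTC' : ∀ j, f (Zs (j+1)) - cm • f (Zs j) ∈ C := by
      intro j
      have hcmZ : cm • Zs j ∈ interior C := interior_smul_pos hC_cone hcm0 (hZint j)
      have m1 : f (Zs (j+1)) - f (cm • Zs j) ∈ C :=
        hf_mono _ hcmZ _ (hZint (j+1)) (hstep1 j)
      have m2 : f (cm • Zs j) - cm • f (Zs j) ∈ C := hsuper (Zs j) (hZint j) cm hcm0 hcm1.le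
      have := hadd m1 m2
      rwa [sub_add_sub_cancel] at this
    obtain ⟨p, hp⟩ := exists_pow_lt_of_lt_one (show (0:ℝ) < s/t by positivity) hcm1
    have hEp_nint : binf • f (Zs p) - Zs p ∉ interior C := by
      have h' : be (Zs p) • f (Zs p) - Zs p ∉ interior C := Mnint (hf_maps _ (hZint p))
      rwa [hbeZ p] at h'
    obtain ⟨ℓ, hℓC, hℓ0, hℓpos⟩ := support_exists hC_convex hC_cone hC_int (hEC p) hEp_nint
    have hdown : ∀ i, i ≤ p → ℓ (binf • f (Zs (p - i)) - Zs (p - i)) = 0 := by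
      intro i
      induction i with
      | zero => intro _; simpa using hℓ0
      | succ n ih =>
        intro hnp
        have hn : n ≤ p := by omega
        have hpn : p - n = (p - (n+1)) + 1 := by omega
        have hid : binf • f (Zs ((p - (n+1)) + 1)) - Zs ((p - (n+1)) + 1) =
            (1 - l) • (binf • f (Zs (p - (n+1))) - Zs (p - (n+1)))
            + binf • (f (Zs ((p - (n+1)) + 1)) - cm • f (Zs (p - (n+1)))) := by
          rw [hZss (p - (n+1))]
          simp only [hgdef, smul_add, smul_sub, smul_smul, add_smul]
          rw [hmul]
          module
        have h0 := ih hn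
        rw [hpn, hid, map_add] at h0
        have hx1 : 0 ≤ ℓ ((1 - l) • (binf • f (Zs (p - (n+1))) - Zs (p - (n+1)))) :=
          hℓC _ (hsm (by linarith) (hEC _))
        have hx2 : 0 ≤ ℓ (binf • (f (Zs ((p-(n+1))+1)) - cm • f (Zs (p-(n+1))))) :=
          hℓC _ (hsm hbinfpos.le (hTC' _))
        have hval : ℓ ((1-l) • (binf • f (Zs (p-(n+1))) - Zs (p-(n+1)))) = 0 := by linarith
        rw [map_smul] at hval
        simp only [smul_eq_mul] at hval
        rcases mul_eq_zero.1 hval with h | h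
        · exfalso; linarith
        · exact h
    have hE0 : ∀ j, j ≤ p → ℓ (f (Zs j)) = ℓ (Zs j) / binf := by
      intro j hj
      have := hdown (p - j) (by omega)
      rw [show p - (p - j) = j by omega, map_sub, map_smul] at this
      simp only [smul_eq_mul] at this
      field_simp
      linarith
    have hgrow : ∀ j, j ≤ p → ℓ (Zs j) = cm ^ j * ℓ z := by
      intro j
      induction j with
      | zero => intro _; simp [hZ0]
      | succ n ih =>
        intro hnp
        have hn : n ≤ p := by omega
        have h1 : ℓ (Zs (n+1)) = l * ℓ (f (Zs n)) + (1 - l) * ℓ (Zs n) := by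
          rw [hZss n]
          simp only [hgdef, map_add, map_smul, smul_eq_mul]
        rw [h1, hE0 n hn, ih hn, pow_succ, hcmdef]
        field_simp
    have hub : ℓ z ≤ t * ℓ u := by
      have h1 := hℓC _ hz_high
      rw [map_sub, map_smul] at h1
      simp only [smul_eq_mul] at h1
      linarith
    have hlb : s * ℓ u ≤ ℓ (Zs p) := by
      have h1 := hℓC _ (hZinv p).1
      rw [map_sub, map_smul] at h1
      simp only [smul_eq_mul] at h1
      linarith
    have hupos : 0 < ℓ u := hℓpos u hu
    have hgp := hgrow p le_rfl
    have h5 : cm ^ p * ℓ z ≤ cm ^ p * (t * ℓ u) :=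
      mul_le_mul_of_nonneg_left hub (pow_nonneg hcm0.le p)
    have h6 : cm ^ p * (t * ℓ u) < (s/t) * (t * ℓ u) :=
      mul_lt_mul_of_pos_right hp (by positivity)
    have h7 : (s/t) * (t * ℓ u) = s * ℓ u := by
      field_simp
    rw [hgp] at hlb
    linarith
  have hbinf_eq : binf = 1 := le_antisymm hB1 hbinf1
  -- ENDGAME : ainf = binf = 1, the cluster point is a fixed point
  have halz : al z ≤ 1 := by
    have h1 : Tendsto (fun i => al (xx (φ i))) atTop (𝓝 (al z)) :=
      seq_al _ _ (fun i => hxx_int _) hz_int hφt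
    have h2 : Tendsto (fun i => Aseq (φ i)) atTop (𝓝 ainf) := hAtend.comp hφtop
    have h3 : ∀ i, al (xx (φ i)) ≤ Aseq (φ i) := fun i => le_max_left _ _
    have := le_of_tendsto_of_tendsto' h1 h2 h3
    rwa [hainf_eq] at this
  have hbez : be z ≤ 1 := by
    have h1 : Tendsto (fun i => be (xx (φ i))) atTop (𝓝 (be z)) :=
      seq_be _ _ (fun i => hxx_int _) hz_int hφt
    have h2 : Tendsto (fun i => Bseq (φ i)) atTop (𝓝 binf) := hBtend.comp hφtop
    have h3 : ∀ i, be (xx (φ i)) ≤ Bseq (φ i) := fun i => le_max_left _ _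
    have := le_of_tendsto_of_tendsto' h1 h2 h3
    rwa [hbinf_eq] at this
  have hfz : f z = z := by
    have h1 : z - f z ∈ C := by
      have ha := hal_mem z hz_int
      have hb : z - al z • z = (1 - al z) • z := by module
      have hb' : z - al z • z ∈ C := by
        rw [hb]; exact hsm (by linarith) (interior_subset hz_int)
      have := hadd hb' ha
      rwa [sub_add_sub_cancel] at this
    have h2 : f z - z ∈ C := by
      have ha := hbe_mem z hz_int
      have hb : f z - be z • f z = (1 - be z) • f z := by module
      have hb' : f z - be z • f z ∈ C := by
        rw [hb]; exact hsm (by linarith) (interior_subset (hf_maps z hz_int))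
      have := hadd hb' ha
      rwa [sub_add_sub_cancel] at this
    have h3 := hC_pointed (f z - z) h2 (by rw [neg_sub]; exact h1)
    exact sub_eq_zero.1 h3
  -- the Lyapunov quantities with respect to z
  set P : ℕ → ℝ := fun k => max (MF C (xx k) z) 1 with hPdef
  set Q : ℕ → ℝ := fun k => max (MF C z (xx k)) 1 with hQdef
  have claimP : ∀ w ∈ interior C, max (MF C (g w) z) 1 ≤ max (MF C w z) 1 := by
    intro w hw
    set m := MF C w z with hmdef
    have hm : m • z - w ∈ C := Mmem hz_int
    have hmpos : 0 < m := Mpos hw hz_int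
    rcases le_or_gt 1 m with h1m | h1m
    · have hmz_int : m • z ∈ interior C := interior_smul_pos hC_cone hmpos hz_int
      have m1 : f (m • z) - f w ∈ C := hf_mono w hw _ hmz_int hm
      have m2 : m • f z - f (m • z) ∈ C := hf_subhom z hz_int m h1m
      rw [hfz] at m2
      have m3 : m • z - f w ∈ C := by
        have := hadd m2 m1
        rwa [sub_add_sub_cancel] at this
      have e : m • z - g w = l • (m • z - f w) + (1 - l) • (m • z - w) := by
        simp only [hgdef, smul_sub, smul_add, smul_smul]
        module
      have h4 : m • z - g w ∈ C := by
        rw [e]; exact hadd (hsm hl0.le m3) (hsm (by linarith) hm)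
      have := Mle hz_int h4
      calc max (MF C (g w) z) 1 ≤ max m 1 := max_le_max this le_rfl
        _ = max (MF C w z) 1 := rfl
    · have hwz : z - w ∈ C := by
        have hb : z - m • z = (1 - m) • z := by module
        have hb' : z - m • z ∈ C := by
          rw [hb]; exact hsm (by linarith) (interior_subset hz_int)
        have := hadd hb' hm
        rwa [sub_add_sub_cancel] at this
      have m1 : f z - f w ∈ C := hf_mono w hw z hz_int hwz
      rw [hfz] at m1
      have e : (1:ℝ) • z - g w = l • (z - f w) + (1 - l) • (z - w) := by
        simp only [hgdef, smul_sub, smul_add, smul_smul, one_smul]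
        module
      have h4 : (1:ℝ) • z - g w ∈ C := by
        rw [e]; exact hadd (hsm hl0.le m1) (hsm (by linarith) hwz)
      have h5 : max (MF C (g w) z) 1 = 1 := max_eq_right (Mle hz_int h4)
      rw [h5]
      exact le_max_right _ _
  have claimQ : ∀ w ∈ interior C, max (MF C z (g w)) 1 ≤ max (MF C z w) 1 := by
    intro w hw
    set m := MF C z w with hmdef
    have hm : m • w - z ∈ C := Mmem hw
    have hmpos : 0 < m := Mpos hz_int hw
    have hgw : g w ∈ interior C := hg_int w hw
    rcases le_or_gt 1 m with h1m | h1m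
    · have hinv : w - m⁻¹ • z ∈ C := by
        have := hsm (inv_nonneg.2 hmpos.le) hm
        rwa [smul_sub, smul_smul, inv_mul_cancel₀ hmpos.ne', one_smul] at this
      have hmz_int : m⁻¹ • z ∈ interior C :=
        interior_smul_pos hC_cone (inv_pos.2 hmpos) hz_int
      have hminv1 : m⁻¹ ≤ 1 := by
        rw [inv_le_one_iff₀]
        right; exact h1m
      have m1 : f w - f (m⁻¹ • z) ∈ C := hf_mono _ hmz_int w hw hinv
      have m2 : f (m⁻¹ • z) - m⁻¹ • f z ∈ C := hsuper z hz_int m⁻¹ (inv_pos.2 hmpos) hminv1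
      rw [hfz] at m2
      have m3 : f w - m⁻¹ • z ∈ C := by
        have := hadd m1 m2
        rwa [sub_add_sub_cancel] at this
      have e : g w - m⁻¹ • z = l • (f w - m⁻¹ • z) + (1 - l) • (w - m⁻¹ • z) := by
        simp only [hgdef, smul_sub, smul_add, smul_smul]
        module
      have h4 : g w - m⁻¹ • z ∈ C := by
        rw [e]; exact hadd (hsm hl0.le m3) (hsm (by linarith) hinv)
      have h5 : m • g w - z ∈ C := by
        have := hsm hmpos.le h4
        rwa [smul_sub, smul_smul, mul_inv_cancel₀ hmpos.ne', one_smul] at this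
      have := Mle hgw h5
      calc max (MF C z (g w)) 1 ≤ max m 1 := max_le_max this le_rfl
        _ = max (MF C z w) 1 := rfl
    · have hzw : w - z ∈ C := by
        have hb : w - m • w = (1 - m) • w := by module
        have hb' : w - m • w ∈ C := by
          rw [hb]; exact hsm (by linarith) (interior_subset hw)
        have := hadd hb' hm
        rwa [sub_add_sub_cancel] at this
      have m1 : f w - f z ∈ C := hf_mono z hz_int w hw hzw
      rw [hfz] at m1
      have e : (1:ℝ) • g w - z = l • (f w - z) + (1 - l) • (w - z) := by
        simp only [hgdef, smul_sub, smul_add, smul_smul, one_smul]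
        module
      have h4 : (1:ℝ) • g w - z ∈ C := by
        rw [e]; exact hadd (hsm hl0.le m1) (hsm (by linarith) hzw)
      have h5 : max (MF C z (g w)) 1 = 1 := max_eq_right (Mle hgw h4)
      rw [h5]
      exact le_max_right _ _
  have hPanti : Antitone P := by
    apply antitone_nat_of_succ_le
    intro k
    have := claimP (xx k) (hxx_int k)
    rw [← hxxs k] at this
    exact this
  have hQanti : Antitone Q := by
    apply antitone_nat_of_succ_le
    intro k
    have := claimQ (xx k) (hxx_int k)
    rw [← hxxs k] at this
    exact this
  -- final convergence
  refine ⟨z, hz_int, hfz, ?_⟩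
  obtain ⟨Kz, hKzpos, hKzb⟩ := order_bound hC_closed hC_pointed hC_cone z
  obtain ⟨η, hη, hsand⟩ := sandwich z hz_int
  rw [Metric.tendsto_atTop]
  intro ε hε
  set ε' : ℝ := min 1 (ε / (4*Kz + 4)) with hε'def
  have hε'0 : 0 < ε' := lt_min one_pos (by positivity)
  have hε'1 : ε' ≤ 1 := min_le_left _ _
  have hφt' := hφt
  rw [Metric.tendsto_atTop] at hφt'
  obtain ⟨N, hN⟩ := hφt' (ε' * η) (by positivity)
  have hdist : ‖xx (φ N) - z‖ ≤ ε' * η := by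
    have := hN N le_rfl
    rw [Function.comp_apply, dist_eq_norm] at this
    linarith
  obtain ⟨h1, h2, _, _⟩ := hsand ε' hε'0 hε'1 (xx (φ N)) (hxx_int (φ N)) hdist
  have hPN : P (φ N) ≤ 1 + ε' := by
    apply max_le (Mle hz_int h1)
    linarith
  have hQN : Q (φ N) ≤ 1 + ε' := by
    apply max_le (Mle (hxx_int (φ N)) h2)
    linarith
  refine ⟨φ N, fun k hk => ?_⟩
  have hPk : MF C (xx k) z ≤ 1 + ε' := le_trans (le_max_left _ _) ((hPanti hk).trans hPN)
  have hQk : MF C z (xx k) ≤ 1 + ε' := le_trans (le_max_left _ _) ((hQanti hk).trans hQN)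
  have A1 : (1 + ε') • z - xx k ∈ C := by
    have hmm := Mmem (a := xx k) hz_int
    have hslack : ((1 + ε') - MF C (xx k) z) • z ∈ C :=
      hsm (by linarith) (interior_subset hz_int)
    have := hadd hslack hmm
    have e : ((1 + ε') - MF C (xx k) z) • z + (MF C (xx k) z • z - xx k)
        = (1 + ε') • z - xx k := by
      rw [sub_smul]; abel
    rwa [e] at this
  have A2 : (1 + ε') • xx k - z ∈ C := by
    have hmm := Mmem (a := z) (hxx_int k)
    have hslack : ((1 + ε') - MF C z (xx k)) • xx k ∈ C :=
      hsm (by linarith) (interior_subset (hxx_int k))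
    have := hadd hslack hmm
    have e : ((1 + ε') - MF C z (xx k)) • xx k + (MF C z (xx k) • xx k - z)
        = (1 + ε') • xx k - z := by
      rw [sub_smul]; abel
    rwa [e] at this
  have c1 : (2*ε') • z - (xx k - z) ∈ C := by
    have e : (2*ε') • z - (xx k - z) = ((1 + ε') • z - xx k) + ε' • z := by
      simp only [smul_sub, add_smul, smul_smul]
      module
    rw [e]
    exact hadd A1 (hsm hε'0.le (interior_subset hz_int))
  have h2z : (2:ℝ) • z - xx k ∈ C := by
    have e : (2:ℝ) • z - xx k = (1 - ε') • z + ((1 + ε') • z - xx k) := by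
      simp only [smul_sub, add_smul, smul_smul]
      module
    rw [e]
    exact hadd (hsm (by linarith) (interior_subset hz_int)) A1
  have c2 : (2*ε') • z + (xx k - z) ∈ C := by
    have e : (2*ε') • z + (xx k - z) = ((1 + ε') • xx k - z) + ε' • ((2:ℝ) • z - xx k) := by
      simp only [smul_sub, add_smul, smul_smul]
      module
    rw [e]
    exact hadd A2 (hsm hε'0.le h2z)
  have hnorm : ‖xx k - z‖ ≤ (2*ε') * Kz :=
    norm_two z Kz hKzb (xx k - z) (2*ε') (by linarith) c1 c2
  rw [dist_eq_norm]
  have hfin : (2*ε') * Kz < ε := by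
    have hε'2 : ε' * (4*Kz + 4) ≤ ε := by
      rw [← le_div_iff₀ (by positivity)]
      exact min_le_right _ _
    nlinarith
  linarith
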